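/- arXiv:2304.02770 — 2 statements merged into one kernel-verified Lean document; each statement's English description precedes it below -/
import Mathlib

section
/- Let f: {±1}^n → ℝ with ∑_S f̂(S)² ≤ 1 (e.g. Boolean f), suppose the level-wise L1 bound ∑_{|S|=i}|f̂(S)| ≤ M^i holds for all i < w with M ≥ 2, and suppose the tail bound ∑_{|S|≥w} f̂(S)² ≤ ε/2. Then there exists a set 𝓕 of at most 2·M^{2w}/ε subsets S ⊆ [n] such that ∑_{S∈𝓕} f̂(S)² ≥ 1 − ε. -/
/-- Fourier coefficient of `f : {±1}^n → ℝ` (inputs encoded as `Fin n → Bool`,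
with `true ↦ -1`, `false ↦ 1`). -/
noncomputable def coef {n : ℕ} (f : (Fin n → Bool) → ℝ) (S : Finset (Fin n)) : ℝ :=
  (∑ x : Fin n → Bool, f x * ∏ i ∈ S, (if x i then (-1 : ℝ) else 1)) / 2 ^ n

/-- Fourier mass concentration: under total mass 1, level-wise L1 bounds
`∑_{|S|=i}|f̂(S)| ≤ M^i` for `i < w`, and tail bound `∑_{|S|≥w} f̂(S)² ≤ ε/2`, there is a
family of at most `2·M^{2w}/ε` coefficients carrying Fourier mass at least `1 − ε`. -/
theorem stmt_8 {n : ℕ} (f : (Fin n → Bool) → ℝ) (w : ℕ) (M ε : ℝ)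
    (hM : 2 ≤ M) (hε : 0 < ε)
    (hpar : ∑ S : Finset (Fin n), coef f S ^ 2 = 1)
    (hL1 : ∀ i < w,
      ∑ S ∈ Finset.univ.filter (fun S : Finset (Fin n) => S.card = i), |coef f S| ≤ M ^ i)
    (htail : ∑ S ∈ Finset.univ.filter (fun S : Finset (Fin n) => w ≤ S.card),
        coef f S ^ 2 ≤ ε / 2) :
    ∃ F : Finset (Finset (Fin n)), (F.card : ℝ) ≤ 2 * M ^ (2 * w) / ε ∧
      1 - ε ≤ ∑ S ∈ F, coef f S ^ 2 := by
  have hMpos : (0:ℝ) < M := by linarith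
  rcases Nat.eq_zero_or_pos w with hw | hw
  · subst hw
    refine ⟨∅, by simp; positivity, ?_⟩
    have h1 : (1:ℝ) ≤ ε / 2 := by
      rw [← hpar]
      calc ∑ S : Finset (Fin n), coef f S ^ 2
          = ∑ S ∈ Finset.univ.filter (fun S : Finset (Fin n) => 0 ≤ S.card),
              coef f S ^ 2 := by simp
        _ ≤ ε / 2 := htail
    simp only [Finset.sum_empty]
    linarith
  · set M' : ℝ := ∑ i ∈ Finset.range w, M ^ i with hM'def
    have hM'pos : 0 < M' := by
      apply Finset.sum_pos (fun i _ => by positivity)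
      exact ⟨0, Finset.mem_range.2 hw⟩
    have hM'le : M' ≤ M ^ w := by
      have h := geom_sum_mul M w
      nlinarith [hM'pos]
    set τ : ℝ := ε / (2 * M') with hτdef
    have hτpos : 0 < τ := by positivity
    set s : Finset (Finset (Fin n)) :=
      Finset.univ.filter (fun S : Finset (Fin n) => S.card < w) with hsdef
    -- level sum bound
    have hlev : ∑ S ∈ s, |coef f S| ≤ M' := by
      have hsplit : ∑ i ∈ Finset.range w,
          ∑ S ∈ s.filter (fun S => S.card = i), |coef f S| = ∑ S ∈ s, |coef f S| := by
        apply Finset.sum_fiberwise_of_maps_to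
        intro S hS
        simp only [hsdef, Finset.mem_filter] at hS
        exact Finset.mem_range.2 hS.2
      rw [← hsplit]
      apply Finset.sum_le_sum
      intro i hi
      have hfe : s.filter (fun S => S.card = i)
          = Finset.univ.filter (fun S : Finset (Fin n) => S.card = i) := by
        ext S
        simp only [hsdef, Finset.filter_filter, Finset.mem_filter, Finset.mem_univ,
          true_and]
        constructor
        · exact fun h => h.2
        · intro h; exact ⟨h ▸ Finset.mem_range.1 hi, h⟩
      rw [hfe]
      exact hL1 i (Finset.mem_range.1 hi)
    set F : Finset (Finset (Fin n)) := s.filter (fun S => τ ≤ |coef f S|) with hFdef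
    refine ⟨F, ?_, ?_⟩
    · -- cardinality bound
      have h1 : (F.card : ℝ) * τ ≤ ∑ S ∈ F, |coef f S| := by
        have := Finset.card_nsmul_le_sum F (fun S => |coef f S|) τ
          (fun S hS => (Finset.mem_filter.1 hS).2)
        simpa [nsmul_eq_mul] using this
      have h2 : ∑ S ∈ F, |coef f S| ≤ ∑ S ∈ s, |coef f S| :=
        Finset.sum_le_sum_of_subset_of_nonneg (Finset.filter_subset _ _)
          (fun S _ _ => abs_nonneg _)
      have hcard : (F.card : ℝ) ≤ M' / τ := by
        rw [le_div_iff₀ hτpos]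
        exact h1.trans (h2.trans hlev)
      have hMτ : M' / τ = 2 * M' ^ 2 / ε := by
        rw [hτdef]; field_simp
      have hfin : 2 * M' ^ 2 / ε ≤ 2 * M ^ (2 * w) / ε := by
        have hpw : M' ^ 2 ≤ M ^ (2 * w) := by
          rw [two_mul, pow_add]
          nlinarith [pow_pos hMpos w]
        gcongr
      calc (F.card : ℝ) ≤ M' / τ := hcard
        _ = 2 * M' ^ 2 / ε := hMτ
        _ ≤ 2 * M ^ (2 * w) / ε := hfin
    · -- mass bound
      have hA : ∑ S ∈ Finset.univ.filter (fun S : Finset (Fin n) => ¬ S.card < w),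
          coef f S ^ 2 ≤ ε / 2 := by
        calc _ = ∑ S ∈ Finset.univ.filter (fun S : Finset (Fin n) => w ≤ S.card),
              coef f S ^ 2 := by
              apply Finset.sum_congr _ (fun _ _ => rfl)
              ext S; simp [Nat.not_lt]
          _ ≤ ε / 2 := htail
      have hC : ∑ S ∈ s.filter (fun S => ¬ τ ≤ |coef f S|), coef f S ^ 2 ≤ ε / 2 := by
        have step1 : ∑ S ∈ s.filter (fun S => ¬ τ ≤ |coef f S|), coef f S ^ 2
            ≤ ∑ S ∈ s.filter (fun S => ¬ τ ≤ |coef f S|), τ * |coef f S| := by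
          apply Finset.sum_le_sum
          intro S hS
          have h := (Finset.mem_filter.1 hS).2
          push_neg at h
          have : coef f S ^ 2 = |coef f S| * |coef f S| := by
            rw [abs_mul_abs_self, sq]
          rw [this]
          exact mul_le_mul_of_nonneg_right h.le (abs_nonneg _)
        have step2 : ∑ S ∈ s.filter (fun S => ¬ τ ≤ |coef f S|), τ * |coef f S|
            ≤ ∑ S ∈ s, τ * |coef f S| :=
          Finset.sum_le_sum_of_subset_of_nonneg (Finset.filter_subset _ _)
            (fun S _ _ => by positivity)
        have step3 : ∑ S ∈ s, τ * |coef f S| = τ * ∑ S ∈ s, |coef f S| := by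
          rw [Finset.mul_sum]
        have step4 : τ * ∑ S ∈ s, |coef f S| ≤ τ * M' :=
          mul_le_mul_of_nonneg_left hlev hτpos.le
        have step5 : τ * M' = ε / 2 := by
          rw [hτdef]; field_simp
        linarith
      have hsplit1 : ∑ S ∈ s, coef f S ^ 2
          + ∑ S ∈ Finset.univ.filter (fun S : Finset (Fin n) => ¬ S.card < w),
              coef f S ^ 2 = 1 := by
        rw [← hpar, hsdef]
        exact Finset.sum_filter_add_sum_filter_not _ _ _
      have hsplit2 : ∑ S ∈ F, coef f S ^ 2
          + ∑ S ∈ s.filter (fun S => ¬ τ ≤ |coef f S|), coef f S ^ 2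
          = ∑ S ∈ s, coef f S ^ 2 := by
        rw [hFdef]
        exact Finset.sum_filter_add_sum_filter_not _ _ _
      clear_value τ s F M'
      linarith only [hsplit1, hsplit2, hA, hC]
end

section
/- Let f: {±1}^n → {±1} and suppose f is computed by a decision tree T of depth d whose leaves are labeled by Boolean functions, such that for every leaf with induced restriction ρ we have W^{≥ℓ}[f|_ρ] ≤ ε (Fourier tail above level ℓ is at most ε). Then W^{≥ℓ+d}[f] ≤ ε. -/
/-- Decision trees whose leaves are labeled by real-valued Boolean functions. -/
inductive FTree (n : ℕ) : Type
  | leaf (g : (Fin n → Bool) → ℝ)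
  | node (i : Fin n) (t0 t1 : FTree n)

namespace FTree

noncomputable def eval {n : ℕ} : FTree n → (Fin n → Bool) → ℝ
  | leaf g, x => g x
  | node i t0 t1, x => if x i then t1.eval x else t0.eval x

def depth {n : ℕ} : FTree n → ℕ
  | leaf _ => 0
  | node _ t0 t1 => max t0.depth t1.depth + 1

/-- The leaves of the tree, each paired with the restriction (list of literals)
induced by its root-to-leaf path. -/
noncomputable def leaves {n : ℕ} :
    FTree n → List (List (Fin n × Bool) × ((Fin n → Bool) → ℝ))
  | leaf g => [([], g)]
  | node i t0 t1 =>
      (t0.leaves.map fun p => ((i, false) :: p.1, p.2))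
        ++ (t1.leaves.map fun p => ((i, true) :: p.1, p.2))

end FTree

/-- `f` restricted by the partial assignment `ρ` (given as a list of literals). -/
noncomputable def restrict {n : ℕ} (f : (Fin n → Bool) → ℝ) (ρ : List (Fin n × Bool)) :
    (Fin n → Bool) → ℝ :=
  fun x => f fun j => (ρ.lookup j).getD (x j)

/-- Fourier weight of `f` at levels `≥ ℓ`. -/
noncomputable def W {n : ℕ} (ℓ : ℕ) (f : (Fin n → Bool) → ℝ) : ℝ :=
  ∑ S ∈ Finset.univ.filter (fun S : Finset (Fin n) => ℓ ≤ S.card), coef f S ^ 2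

section Aux

variable {n : ℕ}

/-- The character function. -/
noncomputable def chi (S : Finset (Fin n)) (x : Fin n → Bool) : ℝ :=
  ∏ i ∈ S, (if x i then (-1 : ℝ) else 1)

lemma coef_eq (f : (Fin n → Bool) → ℝ) (S : Finset (Fin n)) :
    coef f S = (∑ x : Fin n → Bool, f x * chi S x) / 2 ^ n := rfl

lemma restrict_nil (f : (Fin n → Bool) → ℝ) : restrict f [] = f := by
  funext x; simp [restrict]

lemma restrict_cons (f : (Fin n → Bool) → ℝ) (i : Fin n) (b : Bool)
    (p : List (Fin n × Bool)) :
    restrict f ((i, b) :: p) = restrict (restrict f [(i, b)]) p := by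
  funext x
  simp only [restrict]
  congr 1
  funext j
  by_cases h : j = i
  · subst h; simp [List.lookup]
  · simp [List.lookup, beq_false_of_ne h]

lemma restrict_single (f : (Fin n → Bool) → ℝ) (i : Fin n) (b : Bool) (x : Fin n → Bool) :
    restrict f [(i, b)] x = f (Function.update x i b) := by
  simp only [restrict]
  congr 1
  funext j
  by_cases h : j = i
  · subst h; simp [List.lookup]
  · simp [List.lookup, beq_false_of_ne h, Function.update_of_ne h]

lemma restrict_single_update (f : (Fin n → Bool) → ℝ) (i : Fin n) (b c : Bool)
    (x : Fin n → Bool) :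
    restrict f [(i, b)] (Function.update x i c) = restrict f [(i, b)] x := by
  rw [restrict_single, restrict_single, Function.update_idem]

lemma chi_update (S : Finset (Fin n)) (i : Fin n) (hiS : i ∉ S) (c : Bool) (x : Fin n → Bool) :
    chi S (Function.update x i c) = chi S x := by
  unfold chi
  refine Finset.prod_congr rfl fun j hj => ?_
  rw [Function.update_of_ne (by rintro rfl; exact hiS hj)]

/-- Pairing argument: a function independent of coordinate `i`, summed against the sign
of coordinate `i`, gives zero. -/
lemma sum_sign_zero (g : (Fin n → Bool) → ℝ) (i : Fin n)
    (hg : ∀ x c, g (Function.update x i c) = g x) :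
    ∑ x : Fin n → Bool, g x * (if x i then (-1 : ℝ) else 1) = 0 := by
  have hinv : Function.Involutive (fun x : Fin n → Bool => Function.update x i (!(x i))) := by
    intro x
    simp [Function.update_idem]
  have hsum := Equiv.sum_comp hinv.toPerm
    (fun x : Fin n → Bool => g x * (if x i then (-1 : ℝ) else 1))
  have hpt : ∀ x : Fin n → Bool,
      g (Function.update x i (!(x i))) *
        (if (Function.update x i (!(x i))) i then (-1 : ℝ) else 1)
      = - (g x * (if x i then (-1 : ℝ) else 1)) := by
    intro x
    rw [hg, Function.update_self]
    cases hx : x i <;> simp [hx]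
  have : (∑ x : Fin n → Bool, - (g x * (if x i then (-1 : ℝ) else 1)))
      = ∑ x : Fin n → Bool, g x * (if x i then (-1 : ℝ) else 1) := by
    rw [← hsum]
    exact Finset.sum_congr rfl fun x _ => (hpt x).symm ▸ rfl
  rw [Finset.sum_neg_distrib] at this
  linarith

/-- Pointwise decomposition of `f` via the two single-variable restrictions. -/
lemma f_decomp (f : (Fin n → Bool) → ℝ) (i : Fin n) (x : Fin n → Bool) :
    f x = (restrict f [(i, false)] x + restrict f [(i, true)] x) / 2
      + (if x i then (-1 : ℝ) else 1) *
          (restrict f [(i, false)] x - restrict f [(i, true)] x) / 2 := by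
  rw [restrict_single, restrict_single]
  cases hx : x i
  · have h : Function.update x i false = x := by rw [← hx]; exact Function.update_eq_self i x
    rw [h]
    norm_num
    try ring
  · have h : Function.update x i true = x := by rw [← hx]; exact Function.update_eq_self i x
    rw [h]
    norm_num
    try ring

lemma sum_decomp (f : (Fin n → Bool) → ℝ) (i : Fin n) (S : Finset (Fin n)) :
    ∑ x : Fin n → Bool, f x * chi S x
      = (∑ x : Fin n → Bool, restrict f [(i, false)] x * chi S x) / 2
        + (∑ x : Fin n → Bool, restrict f [(i, true)] x * chi S x) / 2
        + (∑ x : Fin n → Bool,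
            (restrict f [(i, false)] x - restrict f [(i, true)] x) *
              ((if x i then (-1 : ℝ) else 1) * chi S x)) / 2 := by
  calc ∑ x : Fin n → Bool, f x * chi S x
      = ∑ x : Fin n → Bool,
          ((restrict f [(i, false)] x * chi S x) / 2
            + (restrict f [(i, true)] x * chi S x) / 2
            + ((restrict f [(i, false)] x - restrict f [(i, true)] x) *
                ((if x i then (-1 : ℝ) else 1) * chi S x)) / 2) := by
        refine Finset.sum_congr rfl fun x _ => ?_
        conv_lhs => rw [f_decomp f i x]
        ring
    _ = _ := by
        rw [Finset.sum_add_distrib, Finset.sum_add_distrib, ← Finset.sum_div,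
          ← Finset.sum_div, ← Finset.sum_div]

lemma coef_notmem (f : (Fin n → Bool) → ℝ) (i : Fin n) (S : Finset (Fin n)) (hiS : i ∉ S) :
    coef f S = (coef (restrict f [(i, false)]) S + coef (restrict f [(i, true)]) S) / 2 := by
  have hzero : ∑ x : Fin n → Bool,
      (restrict f [(i, false)] x - restrict f [(i, true)] x) *
        ((if x i then (-1 : ℝ) else 1) * chi S x) = 0 := by
    have := sum_sign_zero
      (fun x => (restrict f [(i, false)] x - restrict f [(i, true)] x) * chi S x) i
      (fun x c => by simp only [restrict_single_update, chi_update S i hiS])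
    rw [← this]
    exact Finset.sum_congr rfl fun x _ => by ring
  rw [coef_eq, coef_eq, coef_eq, sum_decomp f i S, hzero]
  ring

lemma chi_mem (S : Finset (Fin n)) (i : Fin n) (hiS : i ∈ S) (x : Fin n → Bool) :
    chi S x = (if x i then (-1 : ℝ) else 1) * chi (S.erase i) x :=
  (Finset.mul_prod_erase S _ hiS).symm

lemma coef_mem (f : (Fin n → Bool) → ℝ) (i : Fin n) (S : Finset (Fin n)) (hiS : i ∈ S) :
    coef f S
      = (coef (restrict f [(i, false)]) (S.erase i)
          - coef (restrict f [(i, true)]) (S.erase i)) / 2 := by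
  have hie : i ∉ S.erase i := Finset.notMem_erase i S
  have hsq : ∀ x : Fin n → Bool,
      (if x i then (-1 : ℝ) else 1) * (if x i then (-1 : ℝ) else 1) = 1 := by
    intro x; cases hx : x i <;> simp
  have h0 : ∑ x : Fin n → Bool, restrict f [(i, false)] x * chi S x = 0 := by
    have := sum_sign_zero (fun x => restrict f [(i, false)] x * chi (S.erase i) x) i
      (fun x c => by simp only [restrict_single_update, chi_update _ i hie])
    rw [← this]
    refine Finset.sum_congr rfl fun x _ => ?_
    rw [chi_mem S i hiS]; ring
  have h1 : ∑ x : Fin n → Bool, restrict f [(i, true)] x * chi S x = 0 := by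
    have := sum_sign_zero (fun x => restrict f [(i, true)] x * chi (S.erase i) x) i
      (fun x c => by simp only [restrict_single_update, chi_update _ i hie])
    rw [← this]
    refine Finset.sum_congr rfl fun x _ => ?_
    rw [chi_mem S i hiS]; ring
  have h2 : ∑ x : Fin n → Bool,
      (restrict f [(i, false)] x - restrict f [(i, true)] x) *
        ((if x i then (-1 : ℝ) else 1) * chi S x)
      = ∑ x : Fin n → Bool,
          (restrict f [(i, false)] x * chi (S.erase i) x
            - restrict f [(i, true)] x * chi (S.erase i) x) := by
    refine Finset.sum_congr rfl fun x _ => ?_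
    rw [chi_mem S i hiS]
    rcases Bool.dichotomy (x i) with hx | hx <;> rw [hx] <;> norm_num <;> ring
  rw [coef_eq f S, sum_decomp f i S, h0, h1, h2, Finset.sum_sub_distrib, coef_eq, coef_eq]
  ring

end Aux

section Main

variable {n : ℕ}

lemma W_nonneg (k : ℕ) (f : (Fin n → Bool) → ℝ) : 0 ≤ W k f :=
  Finset.sum_nonneg fun _ _ => sq_nonneg _

lemma W_mono {k m : ℕ} (hkm : k ≤ m) (f : (Fin n → Bool) → ℝ) : W m f ≤ W k f := by
  apply Finset.sum_le_sum_of_subset_of_nonneg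
  · intro S hS
    simp only [Finset.mem_filter, Finset.mem_univ, true_and] at hS ⊢
    exact hkm.trans hS
  · exact fun _ _ _ => sq_nonneg _

lemma W_step (f : (Fin n → Bool) → ℝ) (i : Fin n) (k : ℕ) :
    W (k + 1) f ≤ (W k (restrict f [(i, false)]) + W k (restrict f [(i, true)])) / 2 := by
  set f0 := restrict f [(i, false)] with hf0
  set f1 := restrict f [(i, true)] with hf1
  set C := Finset.univ.filter (fun T : Finset (Fin n) => k ≤ T.card ∧ i ∉ T) with hC
  have hsplit : W (k + 1) f
      = ∑ S ∈ Finset.univ.filter (fun S : Finset (Fin n) => k + 1 ≤ S.card ∧ i ∈ S),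
          coef f S ^ 2
        + ∑ S ∈ Finset.univ.filter (fun S : Finset (Fin n) => k + 1 ≤ S.card ∧ i ∉ S),
          coef f S ^ 2 := by
    rw [W, ← Finset.sum_filter_add_sum_filter_not
      (Finset.univ.filter fun S : Finset (Fin n) => k + 1 ≤ S.card) (fun S => i ∈ S),
      Finset.filter_filter, Finset.filter_filter]
  have hB : ∑ S ∈ Finset.univ.filter (fun S : Finset (Fin n) => k + 1 ≤ S.card ∧ i ∈ S),
        coef f S ^ 2
      = ∑ T ∈ C, ((coef f0 T - coef f1 T) / 2) ^ 2 := by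
    refine Finset.sum_nbij' (fun S => S.erase i) (fun T => insert i T) ?_ ?_ ?_ ?_ ?_
    · intro S hS
      simp only [hC, Finset.mem_filter, Finset.mem_univ, true_and] at hS ⊢
      constructor
      · rw [Finset.card_erase_of_mem hS.2]; omega
      · exact Finset.notMem_erase i S
    · intro T hT
      simp only [hC, Finset.mem_filter, Finset.mem_univ, true_and] at hT ⊢
      constructor
      · rw [Finset.card_insert_of_notMem hT.2]; omega
      · exact Finset.mem_insert_self i T
    · intro S hS
      simp only [Finset.mem_filter, Finset.mem_univ, true_and] at hS
      exact Finset.insert_erase hS.2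
    · intro T hT
      simp only [hC, Finset.mem_filter, Finset.mem_univ, true_and] at hT
      exact Finset.erase_insert hT.2
    · intro S hS
      simp only [Finset.mem_filter, Finset.mem_univ, true_and] at hS
      rw [coef_mem f i S hS.2]
  have hA : ∑ S ∈ Finset.univ.filter (fun S : Finset (Fin n) => k + 1 ≤ S.card ∧ i ∉ S),
        coef f S ^ 2
      ≤ ∑ T ∈ C, ((coef f0 T + coef f1 T) / 2) ^ 2 := by
    have key : ∑ S ∈ Finset.univ.filter (fun S : Finset (Fin n) => k + 1 ≤ S.card ∧ i ∉ S),
          coef f S ^ 2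
        = ∑ S ∈ Finset.univ.filter (fun S : Finset (Fin n) => k + 1 ≤ S.card ∧ i ∉ S),
          ((coef f0 S + coef f1 S) / 2) ^ 2 := by
      refine Finset.sum_congr rfl fun S hS => ?_
      simp only [Finset.mem_filter, Finset.mem_univ, true_and] at hS
      rw [coef_notmem f i S hS.2]
    rw [key]
    apply Finset.sum_le_sum_of_subset_of_nonneg
    · intro S hS
      simp only [hC, Finset.mem_filter, Finset.mem_univ, true_and] at hS ⊢
      exact ⟨by omega, hS.2⟩
    · exact fun _ _ _ => sq_nonneg _
  have e1 : ∑ T ∈ C, ((coef f0 T - coef f1 T) / 2) ^ 2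
        + ∑ T ∈ C, ((coef f0 T + coef f1 T) / 2) ^ 2
      = (∑ T ∈ C, coef f0 T ^ 2) / 2 + (∑ T ∈ C, coef f1 T ^ 2) / 2 := by
    rw [Finset.sum_div, Finset.sum_div, ← Finset.sum_add_distrib, ← Finset.sum_add_distrib]
    exact Finset.sum_congr rfl fun T _ => by ring
  have h0 : ∑ T ∈ C, coef f0 T ^ 2 ≤ W k f0 := by
    apply Finset.sum_le_sum_of_subset_of_nonneg
    · intro T hT
      simp only [hC, Finset.mem_filter, Finset.mem_univ, true_and] at hT ⊢
      exact hT.1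
    · exact fun _ _ _ => sq_nonneg _
  have h1 : ∑ T ∈ C, coef f1 T ^ 2 ≤ W k f1 := by
    apply Finset.sum_le_sum_of_subset_of_nonneg
    · intro T hT
      simp only [hC, Finset.mem_filter, Finset.mem_univ, true_and] at hT ⊢
      exact hT.1
    · exact fun _ _ _ => sq_nonneg _
  linarith

lemma main_lemma (ε : ℝ) : ∀ (T : FTree n) (d ℓ : ℕ) (f : (Fin n → Bool) → ℝ),
    T.depth ≤ d → (∀ p ∈ T.leaves, W ℓ (restrict f p.1) ≤ ε) → W (ℓ + d) f ≤ ε := by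
  intro T
  induction T with
  | leaf g =>
    intro d ℓ f _ hleaves
    have h := hleaves ([], g) (by simp [FTree.leaves])
    rw [restrict_nil] at h
    exact le_trans (W_mono (Nat.le_add_right ℓ d) f) h
  | node i t0 t1 ih0 ih1 =>
    intro d ℓ f hdepth hleaves
    cases d with
    | zero => simp [FTree.depth] at hdepth
    | succ d =>
      simp only [FTree.depth, Nat.add_le_add_iff_right, max_le_iff] at hdepth
      have h0 : W (ℓ + d) (restrict f [(i, false)]) ≤ ε := by
        refine ih0 d ℓ _ hdepth.1 fun p hp => ?_
        rw [← restrict_cons]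
        exact hleaves ((i, false) :: p.1, p.2)
          (by
            simp only [FTree.leaves, List.mem_append, List.mem_map]
            exact Or.inl ⟨p, hp, rfl⟩)
      have h1 : W (ℓ + d) (restrict f [(i, true)]) ≤ ε := by
        refine ih1 d ℓ _ hdepth.2 fun p hp => ?_
        rw [← restrict_cons]
        exact hleaves ((i, true) :: p.1, p.2)
          (by
            simp only [FTree.leaves, List.mem_append, List.mem_map]
            exact Or.inr ⟨p, hp, rfl⟩)
      have hstep := W_step f i (ℓ + d)
      have : ℓ + (d + 1) = (ℓ + d) + 1 := rfl
      rw [this]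
      linarith

end Main

/-- Tal's decision-tree composition lemma for Fourier tails: if `f` is
computed by a depth-`d` tree with function leaves and every leaf restriction `ρ`
satisfies `W^{≥ℓ}[f|_ρ] ≤ ε`, then `W^{≥ℓ+d}[f] ≤ ε`. -/
theorem stmt_11 {n d ℓ : ℕ} (ε : ℝ) (f : (Fin n → Bool) → ℝ)
    (hf : ∀ x, f x = 1 ∨ f x = -1)
    (T : FTree n) (hdepth : T.depth ≤ d)
    (heval : ∀ x, f x = T.eval x)
    (hleaves : ∀ p ∈ T.leaves, W ℓ (restrict f p.1) ≤ ε) :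
    W (ℓ + d) f ≤ ε := by
  exact main_lemma ε T d ℓ f hdepth hleaves
end
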